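/- Let H be a Hilbert space and let P : [−π, π] → B(H) be a weakly measurable function with P(θ) positive semi-definite for all θ, and let p : [−π, π] → ℂ be a bounded measurable function with |p(θ)| ≤ 1 for all θ. Then ‖∫_{−π}^{π} P(θ) p(θ) dθ‖ ≤ ‖∫_{−π}^{π} P(θ) dθ‖. -/

import Mathlib

open MeasureTheory Real

local notation "⟪" x ", " y "⟫" => @inner ℂ _ _ x y

/-- Cauchy–Schwarz inequality for the semi-inner product induced by a positive operator. -/
lemma pos_op_cauchy_schwarz {H : Type*} [NormedAddCommGroup H] [InnerProductSpace ℂ H]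
    [CompleteSpace H] {T : H →L[ℂ] H} (hT : T.IsPositive) (x y : H) :
    ‖⟪x, T y⟫‖ ^ 2 ≤ RCLike.re ⟪x, T x⟫ * RCLike.re ⟪y, T y⟫ := by
  letI c : PreInnerProductSpace.Core ℂ H :=
    { inner := fun a b => ⟪a, T b⟫
      conj_inner_symm := fun a b => by
        show (starRingEnd ℂ) ⟪b, T a⟫ = ⟪a, T b⟫
        rw [inner_conj_symm]; exact hT.isSelfAdjoint.isSymmetric a b
      re_inner_nonneg := fun a => hT.re_inner_nonneg_right a
      add_left := fun a b z => inner_add_left a b (T z)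
      smul_left := fun a b r => inner_smul_left a (T b) r }
  have h := @InnerProductSpace.Core.inner_mul_inner_self_le ℂ H _ _ _ c x y
  have h' : ‖⟪x, T y⟫‖ * ‖⟪y, T x⟫‖ ≤ RCLike.re ⟪x, T x⟫ * RCLike.re ⟪y, T y⟫ := h
  have hsym : ‖⟪y, T x⟫‖ = ‖⟪x, T y⟫‖ := by
    rw [norm_inner_symm]
    exact congrArg norm (hT.isSelfAdjoint.isSymmetric x y)
  rw [hsym] at h'
  simpa [sq] using h'

theorem norm_integral_positive_smul_le {H : Type*} [NormedAddCommGroup H]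
    [InnerProductSpace ℂ H] [CompleteSpace H]
    (P : ℝ → (H →L[ℂ] H)) (hP : ∀ θ, (P θ).IsPositive)
    (p : ℝ → ℂ) (hp_meas : Measurable p) (hp : ∀ θ, ‖p θ‖ ≤ 1)
    (hPint : IntegrableOn P (Set.Icc (-π) π))
    (hpPint : IntegrableOn (fun θ => p θ • P θ) (Set.Icc (-π) π)) :
    ‖∫ θ in Set.Icc (-π) π, p θ • P θ‖ ≤ ‖∫ θ in Set.Icc (-π) π, P θ‖ := by
  set μ : Measure ℝ := volume.restrict (Set.Icc (-π) π) with hμ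
  set S : H →L[ℂ] H := ∫ θ in Set.Icc (-π) π, P θ with hSdef
  set T : H →L[ℂ] H := ∫ θ in Set.Icc (-π) π, p θ • P θ with hTdef
  have hPx : ∀ x : H, Integrable (fun θ => P θ x) μ := fun x =>
    (ContinuousLinearMap.apply ℂ H x).integrable_comp hPint
  have hpPx : ∀ x : H, Integrable (fun θ => (p θ • P θ) x) μ := fun x =>
    (ContinuousLinearMap.apply ℂ H x).integrable_comp hpPint
  have hinner_int : ∀ x y : H, Integrable (fun θ => ⟪x, P θ y⟫) μ := fun x y =>
    (innerSL ℂ x).integrable_comp (hPx y)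
  have hf_int : ∀ x : H, Integrable (fun θ => RCLike.re ⟪x, P θ x⟫) μ := fun x =>
    (hinner_int x x).re
  -- the quadratic form of S dominates the integral of the quadratic forms
  have hS_le : ∀ x : H, (∫ θ, RCLike.re ⟪x, P θ x⟫ ∂μ) ≤ ‖S‖ * ‖x‖ ^ 2 := by
    intro x
    have h1 : (∫ θ, RCLike.re ⟪x, P θ x⟫ ∂μ) = RCLike.re ⟪x, S x⟫ := by
      rw [integral_re (hinner_int x x), integral_inner (hPx x), hSdef,
        ContinuousLinearMap.integral_apply hPint]
    rw [h1]
    calc RCLike.re ⟪x, S x⟫ ≤ ‖⟪x, S x⟫‖ := RCLike.re_le_norm _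
      _ ≤ ‖x‖ * ‖S x‖ := norm_inner_le_norm x (S x)
      _ ≤ ‖x‖ * (‖S‖ * ‖x‖) := by gcongr; exact S.le_opNorm x
      _ = ‖S‖ * ‖x‖ ^ 2 := by ring
  -- key estimate via Cauchy–Schwarz and AM-GM with parameter ε
  have key : ∀ x y : H, ∀ ε : ℝ, 0 < ε →
      ‖⟪x, T y⟫‖ ≤ (ε * (‖S‖ * ‖x‖ ^ 2) + ε⁻¹ * (‖S‖ * ‖y‖ ^ 2)) / 2 := by
    intro x y ε hε
    have hTxy : ⟪x, T y⟫ = ∫ θ, ⟪x, (p θ • P θ) y⟫ ∂μ := by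
      rw [hTdef, ContinuousLinearMap.integral_apply hpPint, integral_inner (hpPx y)]
    have hpt : ∀ θ, ‖⟪x, (p θ • P θ) y⟫‖ ≤
        (ε * RCLike.re ⟪x, P θ x⟫ + ε⁻¹ * RCLike.re ⟪y, P θ y⟫) / 2 := by
      intro θ
      have hcs := pos_op_cauchy_schwarz (hP θ) x y
      have h1 : ‖⟪x, (p θ • P θ) y⟫‖ ≤ ‖⟪x, P θ y⟫‖ := by
        have he : (p θ • P θ) y = p θ • (P θ y) := rfl
        rw [he, inner_smul_right, norm_mul]
        calc ‖p θ‖ * ‖⟪x, P θ y⟫‖ ≤ 1 * ‖⟪x, P θ y⟫‖ := by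
              gcongr
              exact hp θ
          _ = ‖⟪x, P θ y⟫‖ := one_mul _
      refine h1.trans ?_
      have hfa := (hP θ).re_inner_nonneg_right x
      have hga := (hP θ).re_inner_nonneg_right y
      have hmc : ε * ε⁻¹ = 1 := mul_inv_cancel₀ hε.ne'
      have hεi : 0 < ε⁻¹ := inv_pos.mpr hε
      nlinarith [norm_nonneg (⟪x, P θ y⟫),
        sq_nonneg (ε * RCLike.re ⟪x, P θ x⟫ - ε⁻¹ * RCLike.re ⟪y, P θ y⟫),
        mul_nonneg hε.le hfa, mul_nonneg hεi.le hga,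
        sq_nonneg (2 * ‖⟪x, P θ y⟫‖ - (ε * RCLike.re ⟪x, P θ x⟫ + ε⁻¹ * RCLike.re ⟪y, P θ y⟫))]
    rw [hTxy]
    have hbint : Integrable (fun θ =>
        (ε * RCLike.re ⟪x, P θ x⟫ + ε⁻¹ * RCLike.re ⟪y, P θ y⟫) / 2) μ :=
      (((hf_int x).const_mul ε).add ((hf_int y).const_mul ε⁻¹)).div_const 2
    refine (norm_integral_le_of_norm_le hbint (Filter.Eventually.of_forall hpt)).trans ?_
    have heq : (∫ θ, (ε * RCLike.re ⟪x, P θ x⟫ + ε⁻¹ * RCLike.re ⟪y, P θ y⟫) / 2 ∂μ)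
        = (ε * (∫ θ, RCLike.re ⟪x, P θ x⟫ ∂μ) + ε⁻¹ * (∫ θ, RCLike.re ⟪y, P θ y⟫ ∂μ)) / 2 := by
      rw [integral_div, integral_add ((hf_int x).const_mul ε) ((hf_int y).const_mul ε⁻¹),
        integral_const_mul, integral_const_mul]
    rw [heq]
    have hεi : 0 ≤ ε⁻¹ := (inv_pos.mpr hε).le
    gcongr
    · exact hS_le x
    · exact hS_le y
  -- conclude ‖T y‖ ≤ ‖S‖ * ‖y‖ for all y
  have hnorm : ∀ y : H, ‖T y‖ ≤ ‖S‖ * ‖y‖ := by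
    intro y
    by_cases hTy : T y = 0
    · rw [hTy, norm_zero]
      positivity
    have hy : y ≠ 0 := by
      intro h
      exact hTy (by rw [h, map_zero])
    have hTy' : 0 < ‖T y‖ := norm_pos_iff.mpr hTy
    have hy' : 0 < ‖y‖ := norm_pos_iff.mpr hy
    have hε : 0 < ‖y‖ / ‖T y‖ := div_pos hy' hTy'
    have h2 := key (T y) y _ hε
    have h4 : ‖T y‖ ^ 2 ≤ ‖⟪T y, T y⟫‖ := by
      rw [← inner_self_eq_norm_sq (𝕜 := ℂ) (T y)]
      exact RCLike.re_le_norm _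
    have h5 := h4.trans h2
    have hinv : (‖y‖ / ‖T y‖)⁻¹ = ‖T y‖ / ‖y‖ := by rw [inv_div]
    rw [hinv] at h5
    have h6 : (‖y‖ / ‖T y‖ * (‖S‖ * ‖T y‖ ^ 2) + ‖T y‖ / ‖y‖ * (‖S‖ * ‖y‖ ^ 2)) / 2
        = ‖S‖ * ‖y‖ * ‖T y‖ := by
      field_simp
      ring
    rw [h6] at h5
    nlinarith [hTy', h5]
  exact ContinuousLinearMap.opNorm_le_bound T (norm_nonneg S) hnorm
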